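/- Let U and U' be 2^n × 2^n unitary matrices over ℂ with (1/2^n)‖U − U'‖₁ ≤ ε for some real ε ≥ 0. Let r ≥ 1 and let V₀, V₁, …, V_r be 2^n × 2^n unitary matrices. Define A = V₀·U·V₁·U·V₂⋯U·V_r and A' = V₀·U'·V₁·U'·V₂⋯U'·V_r (the alternating products containing r copies of the oracle matrix). Then (1/2^n)|Tr(Aᴴ A')| ≥ 1 − ε − (r − 1)·√(2ε). -/

import Mathlib

open Matrix
open scoped ComplexOrder

/-- The trace norm (Schatten 1-norm) of a complex square matrix: the trace of the
positive semidefinite square root of `Mᴴ * M`. -/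
noncomputable def traceNorm {m : Type*} [Fintype m] [DecidableEq m] (M : Matrix m m ℂ) : ℝ :=
  ((((Matrix.posSemidef_conjTranspose_mul_self M).1.eigenvectorUnitary : Matrix m m ℂ) *
      diagonal ((fun x : ℝ => (x : ℂ)) ∘ (√·) ∘ (Matrix.posSemidef_conjTranspose_mul_self M).1.eigenvalues) *
      (star (Matrix.posSemidef_conjTranspose_mul_self M).1.eigenvectorUnitary : Matrix m m ℂ)).trace).re

private lemma sqrt_congr' {m : Type*} [Fintype m] [DecidableEq m] {A B : Matrix m m ℂ}
    (h : A = B) (hA : A.PosSemidef) (hB : B.PosSemidef) :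
    ((hA.1.eigenvectorUnitary : Matrix m m ℂ) *
      diagonal ((fun x : ℝ => (x : ℂ)) ∘ (√·) ∘ hA.1.eigenvalues) *
      (star hA.1.eigenvectorUnitary : Matrix m m ℂ)) =
    ((hB.1.eigenvectorUnitary : Matrix m m ℂ) *
      diagonal ((fun x : ℝ => (x : ℂ)) ∘ (√·) ∘ hB.1.eigenvalues) *
      (star hB.1.eigenvectorUnitary : Matrix m m ℂ)) := by
  subst h; rfl

private lemma traceNorm_neg' {m : Type*} [Fintype m] [DecidableEq m] (M : Matrix m m ℂ) :
    traceNorm (-M) = traceNorm M := by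
  unfold traceNorm
  rw [sqrt_congr' (show (-M)ᴴ * (-M) = Mᴴ * M by simp)
    (Matrix.posSemidef_conjTranspose_mul_self (-M))
    (Matrix.posSemidef_conjTranspose_mul_self M)]

private lemma abs_trace_unitary_mul_le' {m : Type*} [Fintype m] [DecidableEq m]
    (W M : Matrix m m ℂ) (hW : W ∈ Matrix.unitaryGroup m ℂ) :
    ‖(W * M).trace‖ ≤ traceNorm M := by
  have hH := Matrix.posSemidef_conjTranspose_mul_self M
  set lam := hH.1.eigenvalues with hlam
  set V : Matrix m m ℂ := (hH.1.eigenvectorUnitary : Matrix m m ℂ) with hVdef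
  have hVU : V ∈ Matrix.unitaryGroup m ℂ := hH.1.eigenvectorUnitary.2
  have hVV : star V * V = 1 := Matrix.mem_unitaryGroup_iff'.mp hVU
  have hVV' : V * star V = 1 := Matrix.mem_unitaryGroup_iff.mp hVU
  have hWW : W * star W = 1 := Matrix.mem_unitaryGroup_iff.mp hW
  have hdiag : star V * (Mᴴ * M) * V = Matrix.diagonal (RCLike.ofReal ∘ lam) :=
    by have := hH.1.conjStarAlgAut_star_eigenvectorUnitary
       rwa [Unitary.conjStarAlgAut_star_apply] at this
  have htn : traceNorm M = ∑ i, Real.sqrt (lam i) := by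
    have h1 : traceNorm M = (V * Matrix.diagonal (((↑) : ℝ → ℂ) ∘ Real.sqrt ∘ lam) * star V).trace.re := rfl
    rw [h1, Matrix.trace_mul_cycle, hVV, Matrix.one_mul,
      Matrix.trace_diagonal]
    rw [show ∑ i, ((↑) ∘ Real.sqrt ∘ lam) i = ((∑ i, Real.sqrt (lam i) : ℝ) : ℂ) by
      push_cast; rfl]
    exact Complex.ofReal_re _
  set N : Matrix m m ℂ := star V * (W * M) * V with hN
  have htr : (W * M).trace = N.trace := by
    rw [hN, Matrix.trace_mul_cycle, ← Matrix.mul_assoc, hVV', Matrix.one_mul]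
  have hNsplit : N = (star V * W) * (M * V) := by
    rw [hN]; noncomm_ring
  have hbound : ∀ i, ‖N i i‖ ≤ Real.sqrt (lam i) := by
    intro i
    have hsum1 : ∑ j, ‖(star V * W) i j‖ ^ 2 = 1 := by
      have hA1 : (star V * W) * (star V * W)ᴴ = 1 := by
        rw [Matrix.conjTranspose_mul, ← Matrix.star_eq_conjTranspose W,
          ← Matrix.star_eq_conjTranspose (star V), star_star]
        calc star V * W * (star W * V) = star V * (W * star W) * V := by noncomm_ring
          _ = 1 := by rw [hWW, Matrix.mul_one, hVV]
      have h2 : ((star V * W) * (star V * W)ᴴ) i i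
          = ((∑ j, ‖(star V * W) i j‖ ^ 2 : ℝ) : ℂ) := by
        rw [Matrix.mul_apply]
        push_cast
        congr 1; funext j
        rw [Matrix.conjTranspose_apply, Complex.star_def, Complex.mul_conj, ← Complex.sq_norm]
        push_cast; ring
      rw [hA1, Matrix.one_apply_eq] at h2
      exact_mod_cast h2.symm
    have hsum2 : ∑ j, ‖(M * V) j i‖ ^ 2 = lam i := by
      have hA2 : (M * V)ᴴ * (M * V) = Matrix.diagonal (RCLike.ofReal ∘ lam) := by
        rw [Matrix.conjTranspose_mul, ← hdiag, ← Matrix.star_eq_conjTranspose M]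
        noncomm_ring
      have h2 : ((M * V)ᴴ * (M * V)) i i
          = ((∑ j, ‖(M * V) j i‖ ^ 2 : ℝ) : ℂ) := by
        rw [Matrix.mul_apply]
        push_cast
        congr 1; funext j
        rw [Matrix.conjTranspose_apply, Complex.star_def, mul_comm, Complex.mul_conj, ← Complex.sq_norm]
        push_cast; ring
      rw [hA2] at h2
      have h3 : (Matrix.diagonal (RCLike.ofReal ∘ lam) : Matrix m m ℂ) i i
          = ((lam i : ℝ) : ℂ) := by simp
      rw [h3] at h2
      exact_mod_cast h2.symm
    have hentry : N i i = ∑ j, (star V * W) i j * (M * V) j i := by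
      rw [hNsplit, Matrix.mul_apply]
    calc ‖N i i‖
        ≤ ∑ j, ‖(star V * W) i j‖ * ‖(M * V) j i‖ := by
          rw [hentry]
          refine (norm_sum_le _ _).trans (le_of_eq ?_)
          exact Finset.sum_congr rfl fun j _ => norm_mul _ _
      _ ≤ Real.sqrt (∑ j, ‖(star V * W) i j‖ ^ 2)
            * Real.sqrt (∑ j, ‖(M * V) j i‖ ^ 2) :=
          Real.sum_mul_le_sqrt_mul_sqrt _ _ _
      _ = Real.sqrt (lam i) := by rw [hsum1, hsum2, Real.sqrt_one, one_mul]
  calc ‖(W * M).trace‖ = ‖∑ i, N i i‖ := by rw [htr]; rfl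
    _ ≤ ∑ i, ‖N i i‖ := norm_sum_le _ _
    _ ≤ ∑ i, Real.sqrt (lam i) := Finset.sum_le_sum fun i _ => hbound i
    _ = traceNorm M := htn.symm

theorem fidelity_lower_bound_hybrid (n : ℕ) (ε : ℝ) (hε : 0 ≤ ε)
    (U U' : Matrix (Fin (2 ^ n)) (Fin (2 ^ n)) ℂ)
    (hU : U ∈ Matrix.unitaryGroup (Fin (2 ^ n)) ℂ)
    (hU' : U' ∈ Matrix.unitaryGroup (Fin (2 ^ n)) ℂ)
    (hUU' : (1 / 2 ^ n) * traceNorm (U - U') ≤ ε)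
    (r : ℕ) (hr : 1 ≤ r)
    (V : ℕ → Matrix (Fin (2 ^ n)) (Fin (2 ^ n)) ℂ)
    (hV : ∀ i ≤ r, V i ∈ Matrix.unitaryGroup (Fin (2 ^ n)) ℂ)
    (A A' : Matrix (Fin (2 ^ n)) (Fin (2 ^ n)) ℂ)
    (hA : A = V 0 * ((List.range r).map fun i => U * V (i + 1)).prod)
    (hA' : A' = V 0 * ((List.range r).map fun i => U' * V (i + 1)).prod) :
    1 - ε - ((r : ℝ) - 1) * Real.sqrt (2 * ε) ≤
      (1 / 2 ^ n) * ‖(Aᴴ * A').trace‖ := by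
  set t := traceNorm (U - U') with ht
  have ht' : traceNorm (U' - U) = t := by
    rw [show U' - U = -(U - U') from (neg_sub U U').symm, traceNorm_neg']
  set F : ℕ → Matrix (Fin (2 ^ n)) (Fin (2 ^ n)) ℂ :=
    fun k => V 0 * ((List.range k).map fun i => U * V (i + 1)).prod with hF
  set F' : ℕ → Matrix (Fin (2 ^ n)) (Fin (2 ^ n)) ℂ :=
    fun k => V 0 * ((List.range k).map fun i => U' * V (i + 1)).prod with hF'
  have hFmem : ∀ k ≤ r, F k ∈ Matrix.unitaryGroup (Fin (2 ^ n)) ℂ := by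
    intro k hk
    refine mul_mem (hV 0 (by omega)) (Submonoid.list_prod_mem _ ?_)
    intro x hx
    simp only [List.mem_map, List.mem_range] at hx
    obtain ⟨i, hi, rfl⟩ := hx
    exact mul_mem hU (hV (i + 1) (by omega))
  have hF'mem : ∀ k ≤ r, F' k ∈ Matrix.unitaryGroup (Fin (2 ^ n)) ℂ := by
    intro k hk
    refine mul_mem (hV 0 (by omega)) (Submonoid.list_prod_mem _ ?_)
    intro x hx
    simp only [List.mem_map, List.mem_range] at hx
    obtain ⟨i, hi, rfl⟩ := hx
    exact mul_mem hU' (hV (i + 1) (by omega))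
  have key : ∀ k, k ≤ r →
      ‖((F k)ᴴ * F' k).trace - ((2 ^ n : ℕ) : ℂ)‖ ≤ (k : ℝ) * t := by
    intro k
    induction k with
    | zero =>
      intro _
      have h0 : (V 0)ᴴ * V 0 = 1 := by
        rw [← Matrix.star_eq_conjTranspose]
        exact Matrix.mem_unitaryGroup_iff'.mp (hV 0 (by omega))
      simp only [hF, hF', List.range_zero, List.map_nil, List.prod_nil, mul_one, h0,
        Matrix.trace_one]
      simp
    | succ k ih =>
      intro hk1
      have hk : k ≤ r := by omega
      have ihk := ih hk
      have hB : F k ∈ Matrix.unitaryGroup (Fin (2 ^ n)) ℂ := hFmem k hk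
      have hB' : F' k ∈ Matrix.unitaryGroup (Fin (2 ^ n)) ℂ := hF'mem k hk
      have hVk : V (k + 1) ∈ Matrix.unitaryGroup (Fin (2 ^ n)) ℂ := hV (k + 1) hk1
      have hVkVk : V (k + 1) * star (V (k + 1)) = 1 := Matrix.mem_unitaryGroup_iff.mp hVk
      have hUsU : U * star U = 1 := Matrix.mem_unitaryGroup_iff.mp hU
      have hFs : F (k + 1) = F k * (U * V (k + 1)) := by
        simp [hF, List.range_succ, mul_assoc]
      have hFs' : F' (k + 1) = F' k * (U' * V (k + 1)) := by
        simp [hF', List.range_succ, mul_assoc]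
      set W : Matrix (Fin (2 ^ n)) (Fin (2 ^ n)) ℂ := star U * (star (F k) * F' k) with hW
      have hWmem : W ∈ Matrix.unitaryGroup (Fin (2 ^ n)) ℂ :=
        mul_mem (Unitary.star_mem hU) (mul_mem (Unitary.star_mem hB) hB')
      have h1 : ((F (k + 1))ᴴ * F' (k + 1)).trace = (W * U').trace := by
        rw [hFs, hFs']
        have e1 : (F k * (U * V (k + 1)))ᴴ * (F' k * (U' * V (k + 1)))
            = star (V (k + 1)) * (W * U') * V (k + 1) := by
          simp only [hW, ← Matrix.star_eq_conjTranspose, Matrix.star_mul]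
          noncomm_ring
        rw [e1, Matrix.trace_mul_cycle, ← Matrix.mul_assoc, hVkVk, Matrix.one_mul]
      have h2 : ((F k)ᴴ * F' k).trace = (W * U).trace := by
        have e2 : (F k)ᴴ * F' k = star (F k) * F' k := by
          rw [Matrix.star_eq_conjTranspose]
        rw [e2, hW]
        conv_rhs => rw [Matrix.trace_mul_cycle]
        rw [hUsU, Matrix.one_mul]
      have hdiff : ‖((F (k + 1))ᴴ * F' (k + 1)).trace - ((F k)ᴴ * F' k).trace‖
          ≤ t := by
        rw [h1, h2, show (W * U').trace - (W * U).trace = (W * (U' - U)).trace by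
          rw [← Matrix.trace_sub, ← Matrix.mul_sub]]
        exact (abs_trace_unitary_mul_le' W (U' - U) hWmem).trans (le_of_eq ht')
      calc ‖((F (k + 1))ᴴ * F' (k + 1)).trace - ((2 ^ n : ℕ) : ℂ)‖
          = ‖(((F (k + 1))ᴴ * F' (k + 1)).trace - ((F k)ᴴ * F' k).trace)
            + (((F k)ᴴ * F' k).trace - ((2 ^ n : ℕ) : ℂ))‖ := by ring_nf
        _ ≤ ‖((F (k + 1))ᴴ * F' (k + 1)).trace - ((F k)ᴴ * F' k).trace‖
            + ‖((F k)ᴴ * F' k).trace - ((2 ^ n : ℕ) : ℂ)‖ :=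
            norm_add_le _ _
        _ ≤ t + (k : ℝ) * t := add_le_add hdiff ihk
        _ = ((k + 1 : ℕ) : ℝ) * t := by push_cast; ring
  have hkey := key r le_rfl
  have hTA : (Aᴴ * A').trace = ((F r)ᴴ * F' r).trace := by rw [hA, hA']
  set T := ((F r)ᴴ * F' r).trace with hT
  have hc0 : (0 : ℝ) < 2 ^ n := by positivity
  have habs : (2 : ℝ) ^ n - (r : ℝ) * t ≤ ‖T‖ := by
    have htri : ‖((2 ^ n : ℕ) : ℂ)‖
        ≤ ‖T‖ + ‖T - ((2 ^ n : ℕ) : ℂ)‖ := by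
      calc ‖((2 ^ n : ℕ) : ℂ)‖
          = ‖T + ((((2 ^ n : ℕ) : ℂ)) - T)‖ := by ring_nf
        _ ≤ ‖T‖ + ‖(((2 ^ n : ℕ) : ℂ)) - T‖ := norm_add_le _ _
        _ = ‖T‖ + ‖T - ((2 ^ n : ℕ) : ℂ)‖ := by
            rw [norm_sub_rev]
    have hcast : ‖((2 ^ n : ℕ) : ℂ)‖ = (2 : ℝ) ^ n := by
      rw [Complex.norm_natCast]; push_cast; ring
    rw [hcast] at htri
    linarith
  have hfid : 1 - (r : ℝ) * ε ≤ (1 / 2 ^ n) * ‖T‖ := by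
    have h5 : (r : ℝ) * ((1 / 2 ^ n) * t) ≤ (r : ℝ) * ε :=
      mul_le_mul_of_nonneg_left hUU' (Nat.cast_nonneg r)
    have h6 : (1 / 2 ^ n : ℝ) * ((2 : ℝ) ^ n - (r : ℝ) * t) ≤ (1 / 2 ^ n) * ‖T‖ :=
      mul_le_mul_of_nonneg_left habs (by positivity)
    have h7 : (1 / 2 ^ n : ℝ) * ((2 : ℝ) ^ n - (r : ℝ) * t)
        = 1 - (r : ℝ) * ((1 / 2 ^ n) * t) := by
      field_simp
    rw [h7] at h6
    linarith
  rw [hTA]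
  have hr1 : (1 : ℝ) ≤ (r : ℝ) := by exact_mod_cast hr
  have hs0 : 0 ≤ Real.sqrt (2 * ε) := Real.sqrt_nonneg _
  rcases le_or_gt ε 2 with hε2 | hε2
  · have hsq : ε ≤ Real.sqrt (2 * ε) := by
      have h11 : Real.sqrt (ε ^ 2) ≤ Real.sqrt (2 * ε) := Real.sqrt_le_sqrt (by nlinarith)
      rwa [Real.sqrt_sq hε] at h11
    have h8 : ((r : ℝ) - 1) * ε ≤ ((r : ℝ) - 1) * Real.sqrt (2 * ε) :=
      mul_le_mul_of_nonneg_left hsq (by linarith)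
    linarith
  · have h9 : 0 ≤ (1 / 2 ^ n : ℝ) * ‖T‖ := by positivity
    have h10 : 0 ≤ ((r : ℝ) - 1) * Real.sqrt (2 * ε) := mul_nonneg (by linarith) hs0
    linarith
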